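/- Let p ∈ (0,1) and r(λ) be the unique root of h_λ(x) = p·x^{λ+1} - x + (1-p) in (0,1). Then lim_{λ→((1-p)/p)⁺} r(λ) = 1. -/

import Mathlib

theorem stmt_17 (p : ℝ) (hp : p ∈ Set.Ioo (0 : ℝ) 1)
    (r : ℝ → ℝ)
    (hr : ∀ lam : ℝ, (1 - p) / p < lam →
      r lam ∈ Set.Ioo (0 : ℝ) 1 ∧ p * (r lam) ^ (lam + 1) - r lam + (1 - p) = 0) :
    Filter.Tendsto r (nhdsWithin ((1 - p) / p) (Set.Ioi ((1 - p) / p))) (nhds 1) := by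
  obtain ⟨hp0, hp1⟩ := hp
  set l := (1 - p) / p with hl
  have hpne : p ≠ 0 := ne_of_gt hp0
  have hl1 : l + 1 = 1 / p := by rw [hl, div_add_one hpne, sub_add_cancel]
  have hl0 : 0 < l := div_pos (by linarith) hp0
  -- every root is at least 1 - p
  have hrge : ∀ lam, l < lam → 1 - p ≤ r lam := by
    intro lam hlam
    obtain ⟨⟨h0, h1⟩, heq⟩ := hr lam hlam
    nlinarith [Real.rpow_nonneg h0.le (lam + 1)]
  -- pointwise positivity of the limit function on (0,1)
  have hpos : ∀ x : ℝ, 0 < x → x < 1 → 0 < p * x ^ (l + 1) - x + (1 - p) := by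
    intro x hx0 hx1
    have h1p : (1:ℝ) < 1/p := by
      rw [lt_div_iff₀ hp0]; linarith
    have hb := one_add_mul_self_lt_rpow_one_add (s := x - 1) (by linarith)
      (by intro h; apply absurd (sub_eq_zero.mp h); intro h'; linarith) h1p
    have hx : (1 : ℝ) + (x - 1) = x := by ring
    rw [hx] at hb
    rw [hl1]
    have := mul_lt_mul_of_pos_left hb hp0
    rw [mul_add, ← mul_assoc, mul_one_div_cancel hpne] at this
    linarith
  rw [tendsto_order]
  constructor
  · intro a ha
    set ε := min (1 - a) (p/2) with hε
    have hε0 : 0 < ε := lt_min (by linarith) (by linarith)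
    have hεp : ε < p := lt_of_le_of_lt (min_le_right _ _) (by linarith)
    have hεa : a ≤ 1 - ε := by
      have := min_le_left (1-a) (p/2); simp only [← hε] at this; linarith
    -- minimum of the limit function on [1-p, 1-ε]
    have hne : (Set.Icc (1-p) (1-ε)).Nonempty := ⟨1-p, le_refl _, by linarith⟩
    have hcont : ContinuousOn (fun x : ℝ => p * x ^ (l+1) - x + (1 - p))
        (Set.Icc (1-p) (1-ε)) := by
      apply ContinuousOn.add
      apply ContinuousOn.sub _ continuousOn_id
      apply ContinuousOn.mul continuousOn_const
      · intro x hx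
        exact (Real.continuousAt_rpow_const x (l+1)
          (Or.inl (by intro h; rw [h] at hx; exact absurd hx.1 (by simp; linarith)))).continuousWithinAt
      · exact continuousOn_const
    obtain ⟨x₀, hx₀mem, hx₀min⟩ := isCompact_Icc.exists_isMinOn hne hcont
    set m := p * x₀ ^ (l+1) - x₀ + (1-p) with hm
    have hm0 : 0 < m := hpos x₀ (by have := hx₀mem.1; linarith) (by have := hx₀mem.2; linarith)
    -- eventually (1-p)^(lam - l) is close to 1
    have hcont2 : ContinuousAt (fun lam : ℝ => (1-p) ^ (lam - l)) l :=
      ContinuousAt.comp (Real.continuousAt_const_rpow (by intro h; linarith))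
        (continuousAt_id.sub continuousAt_const)
    have htend : Filter.Tendsto (fun lam : ℝ => (1-p) ^ (lam - l))
        (nhdsWithin l (Set.Ioi l)) (nhds 1) := by
      have h1 : ((1:ℝ)-p) ^ (l - l) = 1 := by simp
      have := hcont2.continuousWithinAt (s := Set.Ioi l)
      rw [ContinuousWithinAt, h1] at this
      exact this
    have hev : ∀ᶠ lam in nhdsWithin l (Set.Ioi l), 1 - m/p < (1-p) ^ (lam - l) :=
      htend.eventually (eventually_gt_nhds (by
        have : 0 < m / p := div_pos hm0 hp0
        linarith))
    filter_upwards [hev, self_mem_nhdsWithin] with lam hlam1 hlam2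
    simp only [Set.mem_Ioi] at hlam2
    by_contra hcon
    push_neg at hcon
    have hrle : r lam ≤ 1 - ε := le_trans hcon hεa
    obtain ⟨⟨h0, h1⟩, heq⟩ := hr lam hlam2
    have hxin : r lam ∈ Set.Icc (1-p) (1-ε) := ⟨hrge lam hlam2, hrle⟩
    have hmin : m ≤ p * (r lam) ^ (l+1) - r lam + (1-p) := hx₀min hxin
    have hsplit : (r lam) ^ (lam + 1) = (r lam) ^ (l+1) * (r lam) ^ (lam - l) := by
      rw [← Real.rpow_add h0]; ring_nf
    have h2 : (1 - p) ^ (lam - l) ≤ (r lam) ^ (lam - l) :=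
      Real.rpow_le_rpow (by linarith) hxin.1 (by linarith)
    have h3 : (r lam) ^ (l+1) ≤ 1 := Real.rpow_le_one h0.le h1.le (by linarith)
    have hA0 : 0 < (r lam) ^ (l+1) := Real.rpow_pos_of_pos h0 _
    have hmp : p * (1 - m/p) = p - m := by field_simp
    rw [hsplit] at heq
    have key : p * (r lam) ^ (l+1) * (1 - m/p) < p * (r lam) ^ (l+1) * ((r lam) ^ (lam - l)) :=
      mul_lt_mul_of_pos_left (lt_of_lt_of_le hlam1 h2) (mul_pos hp0 hA0)
    have e1 : p * (r lam) ^ (l+1) * (1 - m/p) = p * (r lam) ^ (l+1) - (r lam) ^ (l+1) * m := by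
      field_simp
    nlinarith [key, e1, hmin, hm0, mul_le_mul_of_nonneg_right h3 hm0.le]
  · intro b hb
    filter_upwards [self_mem_nhdsWithin] with lam hlam
    exact lt_trans (hr lam hlam).1.2 hb
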